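/- arXiv:0909.0720 — 2 statements merged into one kernel-verified Lean document; each statement's English description precedes it below -/
import Mathlib

section
/- Let (W,S) be a Coxeter system in which every pair of distinct generators commutes (m(s,t) = 2 for all s ≠ t) or satisfies no relation (m(s,t) = infinity). Then an element of W equals the identity if and only if any word representing it can be reduced to the empty word using only deletions of factors ss and swaps of adjacent commuting generators. -/
/-- A single elementary move on words in a right-angled Coxeter system: deletion of a
factor `ss`, or swap of an adjacent pair of commuting generators (`m(s,t) = 2`). -/
def RAMove {B : Type*} (M : CoxeterMatrix B) (ω ω' : List B) : Prop :=
  (∃ (l₁ l₂ : List B) (s : B), ω = l₁ ++ [s, s] ++ l₂ ∧ ω' = l₁ ++ l₂) ∨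
  (∃ (l₁ l₂ : List B) (s t : B), M s t = 2 ∧
    ω = l₁ ++ [s, t] ++ l₂ ∧ ω' = l₁ ++ [t, s] ++ l₂)

namespace RAProof

open Relation List

variable {B : Type*} {M : CoxeterMatrix B}

lemma del_move {x y : List B} (l₁ l₂ : List B) (s : B)
    (hx : x = l₁ ++ [s, s] ++ l₂) (hy : y = l₁ ++ l₂) : RAMove M x y :=
  Or.inl ⟨l₁, l₂, s, hx, hy⟩

lemma swap_move {x y : List B} (l₁ l₂ : List B) {s t : B} (h : M s t = 2)
    (hx : x = l₁ ++ [s, t] ++ l₂) (hy : y = l₁ ++ [t, s] ++ l₂) : RAMove M x y :=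
  Or.inr ⟨l₁, l₂, s, t, h, hx, hy⟩

/-- slide a letter `s` rightwards across a block `m` of letters commuting with it -/
lemma slide {s : B} : ∀ (m : List B), (∀ x ∈ m, M s x = 2) → ∀ l₁ l₂ : List B,
    ReflTransGen (RAMove M) (l₁ ++ s :: (m ++ l₂)) (l₁ ++ m ++ s :: l₂)
  | [], _, l₁, l₂ => by simp; exact ReflTransGen.refl
  | x :: m', h, l₁, l₂ => by
    have step : RAMove M (l₁ ++ s :: (x :: m' ++ l₂)) (l₁ ++ x :: s :: (m' ++ l₂)) :=
      swap_move l₁ (m' ++ l₂) (h x (by simp)) (by simp) (by simp)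
    have rest := slide m' (fun y hy => h y (by simp [hy])) (l₁ ++ [x]) l₂
    exact ReflTransGen.head step (by simpa using rest)

/-- slide a letter `s` leftwards across a block `m` of letters commuting with it -/
lemma slide_rev {s : B} : ∀ (m : List B), (∀ x ∈ m, M s x = 2) → ∀ l₁ l₂ : List B,
    ReflTransGen (RAMove M) (l₁ ++ m ++ s :: l₂) (l₁ ++ s :: (m ++ l₂))
  | [], _, l₁, l₂ => by simp; exact ReflTransGen.refl
  | x :: m', h, l₁, l₂ => by
    have h1 := slide_rev m' (fun y hy => h y (by simp [hy])) (l₁ ++ [x]) l₂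
    have step : RAMove M (l₁ ++ x :: s :: (m' ++ l₂)) (l₁ ++ s :: x :: (m' ++ l₂)) :=
      swap_move l₁ (m' ++ l₂) ((M.symmetric x s).trans (h x (by simp))) (by simp) (by simp)
    refine ReflTransGen.trans (by simpa using h1) ?_
    exact ReflTransGen.single (by simpa using step)

/-- words admitting a reduction to the empty word in `n` steps -/
inductive Red (M : CoxeterMatrix B) : ℕ → List B → Prop
  | nil : Red M 0 []
  | step {n : ℕ} {ω ω' : List B} : RAMove M ω ω' → Red M n ω' → Red M (n + 1) ω

lemma rtg_of_red {n : ℕ} {ω : List B} (h : Red M n ω) : ReflTransGen (RAMove M) ω [] := by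
  induction h with
  | nil => exact ReflTransGen.refl
  | step hmv _ ih => exact ReflTransGen.head hmv ih

lemma red_of_rtg {ω : List B} (h : ReflTransGen (RAMove M) ω []) : ∃ n, Red M n ω := by
  induction h using ReflTransGen.head_induction_on with
  | refl => exact ⟨0, Red.nil⟩
  | head hmv _ ih => obtain ⟨n, hn⟩ := ih; exact ⟨n + 1, Red.step hmv hn⟩


/-- Where can an adjacent pair `[u,v]` sit inside `l₁ ++ [s] ++ m ++ [s] ++ l₂`? -/
lemma split_pair {α : Type*} {a₁ a₂ l₁ m l₂ : List α} {u v s : α}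
    (h : a₁ ++ [u, v] ++ a₂ = l₁ ++ [s] ++ m ++ [s] ++ l₂) :
    (∃ c, l₁ = a₁ ++ [u, v] ++ c ∧ a₂ = c ++ [s] ++ m ++ [s] ++ l₂) ∨
    (l₁ = a₁ ++ [u] ∧ v = s ∧ a₂ = m ++ [s] ++ l₂) ∨
    (a₁ = l₁ ∧ u = s ∧ ∃ m', m = v :: m' ∧ a₂ = m' ++ [s] ++ l₂) ∨
    (a₁ = l₁ ∧ u = s ∧ m = [] ∧ v = s ∧ a₂ = l₂) ∨
    (∃ c d, m = c ++ [u, v] ++ d ∧ a₁ = l₁ ++ [s] ++ c ∧ a₂ = d ++ [s] ++ l₂) ∨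
    (∃ c, m = c ++ [u] ∧ v = s ∧ a₁ = l₁ ++ [s] ++ c ∧ a₂ = l₂) ∨
    (u = s ∧ a₁ = l₁ ++ [s] ++ m ∧ ∃ l₂', l₂ = v :: l₂' ∧ a₂ = l₂') ∨
    (∃ c, a₁ = l₁ ++ [s] ++ m ++ [s] ++ c ∧ l₂ = c ++ [u, v] ++ a₂) := by
  have h' : a₁ ++ (u :: v :: a₂) = l₁ ++ (s :: (m ++ s :: l₂)) := by
    simpa using h
  rcases List.append_eq_append_iff.mp h' with ⟨c, hc1, hc2⟩ | ⟨c, hc1, hc2⟩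
  · -- hc1 : l₁ = a₁ ++ c, hc2 : u :: v :: a₂ = c ++ (s :: (m ++ s :: l₂))
    match c, hc2 with
    | [], hc2 =>
      have hc2' : u :: v :: a₂ = s :: (m ++ s :: l₂) := by simpa using hc2
      obtain ⟨hu, hr⟩ := List.cons_eq_cons.mp hc2'
      match m, hr with
      | [], hr =>
        have hr' : v :: a₂ = s :: l₂ := by simpa using hr
        obtain ⟨hv, ha⟩ := List.cons_eq_cons.mp hr'
        exact Or.inr <| Or.inr <| Or.inr <| Or.inl ⟨by simpa using hc1.symm, hu, rfl, hv, ha⟩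
      | x :: m', hr =>
        have hr' : v :: a₂ = x :: (m' ++ s :: l₂) := by simpa using hr
        obtain ⟨hv, ha⟩ := List.cons_eq_cons.mp hr'
        subst hv
        exact Or.inr <| Or.inr <| Or.inl
          ⟨by simpa using hc1.symm, hu, m', rfl, by simpa using ha⟩
    | w :: c', hc2 =>
      have hc2' : u :: v :: a₂ = w :: (c' ++ s :: (m ++ s :: l₂)) := by simpa using hc2
      obtain ⟨hu, hr⟩ := List.cons_eq_cons.mp hc2'
      subst hu
      match c', hr with
      | [], hr =>
        have hr' : v :: a₂ = s :: (m ++ s :: l₂) := by simpa using hr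
        obtain ⟨hv, ha⟩ := List.cons_eq_cons.mp hr'
        exact Or.inr <| Or.inl ⟨by simpa using hc1, hv, by simpa using ha⟩
      | z :: c'', hr =>
        have hr' : v :: a₂ = z :: (c'' ++ s :: (m ++ s :: l₂)) := by simpa using hr
        obtain ⟨hv, ha⟩ := List.cons_eq_cons.mp hr'
        subst hv
        exact Or.inl ⟨c'', by simpa using hc1, by simpa using ha⟩
  · -- hc1 : a₁ = l₁ ++ c, hc2 : s :: (m ++ s :: l₂) = c ++ (u :: v :: a₂)
    match c, hc2 with
    | [], hc2 =>
      have hc2' : u :: v :: a₂ = s :: (m ++ s :: l₂) := by simpa using hc2.symm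
      obtain ⟨hu, hr⟩ := List.cons_eq_cons.mp hc2'
      match m, hr with
      | [], hr =>
        have hr' : v :: a₂ = s :: l₂ := by simpa using hr
        obtain ⟨hv, ha⟩ := List.cons_eq_cons.mp hr'
        exact Or.inr <| Or.inr <| Or.inr <| Or.inl ⟨by simpa using hc1, hu, rfl, hv, ha⟩
      | x :: m', hr =>
        have hr' : v :: a₂ = x :: (m' ++ s :: l₂) := by simpa using hr
        obtain ⟨hv, ha⟩ := List.cons_eq_cons.mp hr'
        subst hv
        exact Or.inr <| Or.inr <| Or.inl
          ⟨by simpa using hc1, hu, m', rfl, by simpa using ha⟩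
    | w :: c', hc2 =>
      have hc2' : s :: (m ++ s :: l₂) = w :: (c' ++ u :: v :: a₂) := by simpa using hc2
      obtain ⟨hw, hr⟩ := List.cons_eq_cons.mp hc2'
      -- hw : s = w, hr : m ++ s :: l₂ = c' ++ u :: v :: a₂
      rcases List.append_eq_append_iff.mp
          (show m ++ (s :: l₂) = c' ++ (u :: v :: a₂) from hr) with
        ⟨d, hd1, hd2⟩ | ⟨d, hd1, hd2⟩
      · -- hd1 : c' = m ++ d, hd2 : s :: l₂ = d ++ u :: v :: a₂
        match d, hd2 with
        | [], hd2 =>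
          have hd2' : s :: l₂ = u :: v :: a₂ := by simpa using hd2
          obtain ⟨hu, hl⟩ := List.cons_eq_cons.mp hd2'
          exact Or.inr <| Or.inr <| Or.inr <| Or.inr <| Or.inr <| Or.inr <| Or.inl
            ⟨hu.symm, by simp [hc1, hd1, ← hw], a₂, hl, rfl⟩
        | e :: d', hd2 =>
          have hd2' : s :: l₂ = e :: (d' ++ u :: v :: a₂) := by simpa using hd2
          obtain ⟨he, hl⟩ := List.cons_eq_cons.mp hd2'
          exact Or.inr <| Or.inr <| Or.inr <| Or.inr <| Or.inr <| Or.inr <| Or.inr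
            ⟨d', by simp [hc1, hd1, ← hw, ← he], by simpa using hl⟩
      · -- hd1 : m = c' ++ d, hd2 : u :: v :: a₂ = d ++ s :: l₂
        match d, hd2 with
        | [], hd2 =>
          have hd2' : u :: v :: a₂ = s :: l₂ := by simpa using hd2
          obtain ⟨hu, hl⟩ := List.cons_eq_cons.mp hd2'
          exact Or.inr <| Or.inr <| Or.inr <| Or.inr <| Or.inr <| Or.inr <| Or.inl
            ⟨hu, by simp [hc1, ← hw, hd1], a₂, hl.symm, rfl⟩
        | y :: d', hd2 =>
          have hd2' : u :: v :: a₂ = y :: (d' ++ s :: l₂) := by simpa using hd2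
          obtain ⟨hy, hr2⟩ := List.cons_eq_cons.mp hd2'
          match d', hr2 with
          | [], hr2 =>
            have hr2' : v :: a₂ = s :: l₂ := by simpa using hr2
            obtain ⟨hv, ha⟩ := List.cons_eq_cons.mp hr2'
            exact Or.inr <| Or.inr <| Or.inr <| Or.inr <| Or.inr <| Or.inl
              ⟨c', by simp [hd1, ← hy], hv, by simp [hc1, ← hw], ha⟩
          | z :: d'', hr2 =>
            have hr2' : v :: a₂ = z :: (d'' ++ s :: l₂) := by simpa using hr2
            obtain ⟨hv, ha⟩ := List.cons_eq_cons.mp hr2'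
            exact Or.inr <| Or.inr <| Or.inr <| Or.inr <| Or.inl
              ⟨c', d'', by simp [hd1, ← hy, ← hv], by simp [hc1, ← hw], by simpa using ha⟩

/-- Key confluence-type lemma: if `ω` reduces to the empty word and contains a pattern
`l₁ ++ [s] ++ m ++ [s] ++ l₂` with every letter of `m` commuting with `s`, then the
result `l₁ ++ m ++ l₂` of cancelling the two `s`'s also reduces to the empty word. -/
lemma key : ∀ n : ℕ, ∀ (ω l₁ m l₂ : List B) (s : B), Red M n ω →
    (∀ x ∈ m, M s x = 2) → ω = l₁ ++ [s] ++ m ++ [s] ++ l₂ →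
    ReflTransGen (RAMove M) (l₁ ++ m ++ l₂) [] := by
  intro n
  induction n with
  | zero =>
    intro ω l₁ m l₂ s hred hm hshape
    cases hred
    simp at hshape
  | succ n ih =>
    intro ω l₁ m l₂ s hred hm hshape
    obtain ⟨ω₂, hmv, hred'⟩ : ∃ ω₂, RAMove M ω ω₂ ∧ Red M n ω₂ := by
      cases hred with | step hmv hred' => exact ⟨_, hmv, hred'⟩
    rcases hmv with ⟨a₁, a₂, u, hω, hω₂⟩ | ⟨a₁, a₂, u, v, huv, hω, hω₂⟩
    · -- first step is a deletion of [u, u]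
      subst hω₂
      have heq : a₁ ++ [u, u] ++ a₂ = l₁ ++ [s] ++ m ++ [s] ++ l₂ := hω ▸ hshape
      rcases split_pair heq with
        ⟨c, hl₁, ha₂⟩ | ⟨hl₁, hv, ha₂⟩ | ⟨ha₁, hu, m', hmeq, ha₂⟩ |
        ⟨ha₁, hu, hmnil, hv, ha₂⟩ | ⟨c, d, hmeq, ha₁, ha₂⟩ | ⟨c, hmeq, hv, ha₁, ha₂⟩ |
        ⟨hu, ha₁, l₂', hl₂, ha₂⟩ | ⟨c, ha₁, hl₂⟩
      · -- pair inside l₁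
        have h2 := ih (a₁ ++ a₂) (a₁ ++ c) m l₂ s hred' hm (by simp [ha₂])
        exact ReflTransGen.head (del_move a₁ (c ++ m ++ l₂) u (by simp [hl₁]) rfl)
          (by simpa using h2)
      · -- pair = (last of l₁, first s)
        subst hv
        have h2 : ReflTransGen (RAMove M) (a₁ ++ m ++ u :: l₂) [] := by
          have := rtg_of_red hred'
          rw [ha₂] at this
          simpa using this
        rw [hl₁]
        exact ReflTransGen.trans (by simpa using slide m hm a₁ l₂) h2
      · -- pair = (first s, head of m): impossible for a deletion
        exfalso
        have h2 := hm u (by simp [hmeq])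
        rw [hu, M.diagonal] at h2
        omega
      · -- pair = the two s's (m = [])
        have := rtg_of_red hred'
        rw [ha₁, ha₂] at this
        simpa [hmnil] using this
      · -- pair inside m
        have hm' : ∀ x ∈ c ++ d, M s x = 2 := by
          intro x hx
          exact hm x (by simp [hmeq]; rcases (by simpa using hx) with h | h <;> simp [h])
        have h2 := ih (a₁ ++ a₂) l₁ (c ++ d) l₂ s hred' hm' (by simp [ha₁, ha₂])
        rw [hmeq]
        exact ReflTransGen.head (del_move (l₁ ++ c) (d ++ l₂) u (by simp) rfl)
          (by simpa using h2)
      · -- pair = (last of m, second s): impossible for a deletion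
        exfalso
        have h2 := hm u (by simp [hmeq])
        rw [hv, M.diagonal] at h2
        omega
      · -- pair = (second s, head of l₂)
        subst hu
        have h2 : ReflTransGen (RAMove M) (l₁ ++ u :: (m ++ l₂')) [] := by
          have := rtg_of_red hred'
          rw [ha₁, ha₂] at this
          simpa using this
        rw [hl₂]
        exact ReflTransGen.trans (by simpa using slide_rev m hm l₁ l₂') h2
      · -- pair inside l₂
        have h2 := ih (a₁ ++ a₂) l₁ m (c ++ a₂) s hred' hm (by simp [ha₁])
        rw [hl₂]
        exact ReflTransGen.head (del_move (l₁ ++ m ++ c) a₂ u (by simp) rfl)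
          (by simpa using h2)
    · -- first step is a swap of [u, v] with M u v = 2
      subst hω₂
      have heq : a₁ ++ [u, v] ++ a₂ = l₁ ++ [s] ++ m ++ [s] ++ l₂ := hω ▸ hshape
      rcases split_pair heq with
        ⟨c, hl₁, ha₂⟩ | ⟨hl₁, hv, ha₂⟩ | ⟨ha₁, hu, m', hmeq, ha₂⟩ |
        ⟨ha₁, hu, hmnil, hv, ha₂⟩ | ⟨c, d, hmeq, ha₁, ha₂⟩ | ⟨c, hmeq, hv, ha₁, ha₂⟩ |
        ⟨hu, ha₁, l₂', hl₂, ha₂⟩ | ⟨c, ha₁, hl₂⟩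
      · -- pair inside l₁
        have h2 := ih (a₁ ++ [v, u] ++ a₂) (a₁ ++ [v, u] ++ c) m l₂ s hred' hm
          (by simp [ha₂])
        exact ReflTransGen.head (swap_move a₁ (c ++ m ++ l₂) huv (by simp [hl₁]) rfl)
          (by simpa using h2)
      · -- pair = (last of l₁, first s)
        have hm' : ∀ x ∈ u :: m, M s x = 2 := by
          intro x hx
          rcases (by simpa using hx) with h | h
          · rw [h, M.symmetric, ← hv]; exact huv
          · exact hm x h
        have h2 := ih (a₁ ++ [v, u] ++ a₂) a₁ (u :: m) l₂ s hred' hm' (by simp [ha₂, hv])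
        rw [hl₁]
        simpa using h2
      · -- pair = (first s, head of m)
        subst hu
        have h2 := ih (a₁ ++ [v, u] ++ a₂) (l₁ ++ [v]) m' l₂ u hred'
          (fun x hx => hm x (by simp [hmeq, hx])) (by simp [ha₁, ha₂])
        rw [hmeq]
        simpa using h2
      · -- pair = the two s's: impossible for a swap
        exfalso
        rw [hu, hv, M.diagonal] at huv
        omega
      · -- pair inside m
        have hm' : ∀ x ∈ c ++ [v, u] ++ d, M s x = 2 := by
          intro x hx
          refine hm x ?_
          simp only [hmeq]
          rcases (by simpa using hx) with h | h | h | h <;> simp [h]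
        have h2 := ih (a₁ ++ [v, u] ++ a₂) l₁ (c ++ [v, u] ++ d) l₂ s hred' hm'
          (by simp [ha₁, ha₂])
        rw [hmeq]
        exact ReflTransGen.head (swap_move (l₁ ++ c) (d ++ l₂) huv (by simp) rfl)
          (by simpa using h2)
      · -- pair = (last of m, second s)
        have h2 := ih (a₁ ++ [v, u] ++ a₂) l₁ c (u :: l₂) s hred'
          (fun x hx => hm x (by simp [hmeq, hx])) (by simp [ha₁, ha₂, hv])
        rw [hmeq]
        simpa using h2
      · -- pair = (second s, head of l₂)
        subst hu
        have hm' : ∀ x ∈ m ++ [v], M u x = 2 := by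
          intro x hx
          rcases (by simpa using hx) with h | h
          · exact hm x h
          · rw [h]; exact huv
        have h2 := ih (a₁ ++ [v, u] ++ a₂) l₁ (m ++ [v]) l₂' u hred' hm'
          (by simp [ha₁, ha₂])
        rw [hl₂]
        simpa using h2
      · -- pair inside l₂
        have h2 := ih (a₁ ++ [v, u] ++ a₂) l₁ m (c ++ [v, u] ++ a₂) s hred' hm
          (by simp [ha₁])
        rw [hl₂]
        exact ReflTransGen.head (swap_move (l₁ ++ m ++ c) a₂ huv (by simp) rfl)
          (by simpa using h2)

/-- a single move preserves the word product -/
lemma wordProd_eq_of_move {W : Type*} [Group W] (cs : CoxeterSystem M W) {ω ω' : List B}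
    (h : RAMove M ω ω') : cs.wordProd ω = cs.wordProd ω' := by
  rcases h with ⟨l₁, l₂, s, hx, hy⟩ | ⟨l₁, l₂, s, t, hst, hx, hy⟩
  · subst hx hy
    rw [cs.wordProd_append, cs.wordProd_append, cs.wordProd_append, cs.wordProd_cons,
      cs.wordProd_singleton, cs.simple_mul_simple_self, mul_one]
  · subst hx hy
    have h2' : (cs.simple s * cs.simple t) * (cs.simple s * cs.simple t) = 1 := by
      have h2 := cs.simple_mul_simple_pow s t
      rw [hst, pow_two] at h2
      exact h2
    have hcomm : cs.simple s * cs.simple t = cs.simple t * cs.simple s := by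
      calc cs.simple s * cs.simple t = (cs.simple s * cs.simple t)⁻¹ :=
            (inv_eq_of_mul_eq_one_right h2').symm
        _ = (cs.simple t)⁻¹ * (cs.simple s)⁻¹ := by rw [mul_inv_rev]
        _ = cs.simple t * cs.simple s := by rw [cs.inv_simple, cs.inv_simple]
    simp only [cs.wordProd_append, cs.wordProd_cons, cs.wordProd_nil, mul_one,
      cs.wordProd_singleton]
    rw [hcomm]

lemma wordProd_eq_one_of_rtg {W : Type*} [Group W] (cs : CoxeterSystem M W) {ω : List B}
    (h : ReflTransGen (RAMove M) ω []) : cs.wordProd ω = 1 := by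
  have key : ∀ {a b : List B}, ReflTransGen (RAMove M) a b →
      cs.wordProd a = cs.wordProd b := by
    intro a b hab
    induction hab with
    | refl => rfl
    | tail _ hmv ih => exact ih.trans (wordProd_eq_of_move cs hmv)
  simpa using key h

/-- the quotient of the free monoid by the elementary moves -/
abbrev Q (M : CoxeterMatrix B) := Quot (RAMove M)

lemma cons_move {a : B} {ω ω' : List B} (h : RAMove M ω ω') : RAMove M (a :: ω) (a :: ω') := by
  rcases h with ⟨l₁, l₂, s, hx, hy⟩ | ⟨l₁, l₂, s, t, hst, hx, hy⟩
  · exact del_move (a :: l₁) l₂ s (by simp [hx]) (by simp [hy])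
  · exact swap_move (a :: l₁) l₂ hst (by simp [hx]) (by simp [hy])

/-- left multiplication by a generator on the quotient -/
def mu (a : B) : Q M → Q M := Quot.map (a :: ·) (fun _ _ h => cons_move h)

lemma mu_mk (a : B) (ω : List B) :
    mu a (Quot.mk (RAMove M) ω) = Quot.mk (RAMove M) (a :: ω) := rfl

lemma mu_mu (a : B) (x : Q M) : mu a (mu a x) = x := by
  induction x using Quot.ind with
  | _ ω => exact Quot.sound (del_move [] ω a rfl rfl)

/-- left multiplication by a generator, as a permutation of the quotient -/
def perm (M : CoxeterMatrix B) (a : B) : Equiv.Perm (Q M) := ⟨mu a, mu a, mu_mu a, mu_mu a⟩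

lemma perm_apply (a : B) (ω : List B) :
    perm M a (Quot.mk (RAMove M) ω) = Quot.mk (RAMove M) (a :: ω) := rfl

lemma liftable (hM : ∀ s t : B, s ≠ t → M s t = 2 ∨ M s t = 0) :
    M.IsLiftable (perm M) := by
  intro i j
  rcases eq_or_ne i j with rfl | hne
  · rw [M.diagonal, pow_one]
    ext x
    simp only [Equiv.Perm.mul_apply, Equiv.Perm.one_apply]
    exact mu_mu i x
  · rcases hM i j hne with h2 | h0
    · rw [h2, pow_two]
      ext x
      induction x using Quot.ind with
      | _ ω =>
      simp only [Equiv.Perm.mul_apply, Equiv.Perm.one_apply, perm_apply]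
      have s1 : Quot.mk (RAMove M) (i :: j :: i :: j :: ω)
          = Quot.mk (RAMove M) (i :: i :: j :: j :: ω) :=
        Quot.sound (swap_move [i] (j :: ω) ((M.symmetric j i).trans h2) (by simp) (by simp))
      have s2 : Quot.mk (RAMove M) (i :: i :: j :: j :: ω)
          = Quot.mk (RAMove M) (j :: j :: ω) :=
        Quot.sound (del_move [] (j :: j :: ω) i (by simp) rfl)
      have s3 : Quot.mk (RAMove M) (j :: j :: ω) = Quot.mk (RAMove M) ω :=
        Quot.sound (del_move [] ω j (by simp) rfl)
      exact s1.trans (s2.trans s3)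
    · rw [h0, pow_zero]

lemma act_word {W : Type*} [Group W] (cs : CoxeterSystem M W)
    (hM : ∀ s t : B, s ≠ t → M s t = 2 ∨ M s t = 0) :
    ∀ ω ω' : List B,
      (cs.lift ⟨perm M, liftable hM⟩) (cs.wordProd ω) (Quot.mk (RAMove M) ω')
        = Quot.mk (RAMove M) (ω ++ ω') := by
  intro ω
  induction ω with
  | nil => intro ω'; simp
  | cons a ω ih =>
    intro ω'
    rw [cs.wordProd_cons, map_mul, Equiv.Perm.mul_apply, ih, cs.lift_apply_simple, perm_apply]
    rfl

lemma rtg_of_eqvGen : ∀ {ω ω' : List B}, Relation.EqvGen (RAMove M) ω ω' →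
    (ReflTransGen (RAMove M) ω' [] ↔ ReflTransGen (RAMove M) ω []) := by
  intro ω ω' h
  induction h with
  | rel a b hab =>
    constructor
    · intro hb
      exact ReflTransGen.head hab hb
    · intro ha
      rcases hab with ⟨l₁, l₂, s, hx, hy⟩ | ⟨l₁, l₂, s, t, hst, hx, hy⟩
      · obtain ⟨n, hn⟩ := red_of_rtg ha
        subst hy
        have := key n a l₁ [] l₂ s hn (by simp) (by simpa using hx)
        simpa using this
      · subst hy
        exact ReflTransGen.head
          (swap_move l₁ l₂ ((M.symmetric t s).trans hst) rfl hx) ha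
  | refl a => exact Iff.rfl
  | symm a b _ ih => exact ih.symm
  | trans a b c _ _ ih1 ih2 => exact ih2.trans ih1

end RAProof

/-- Let `(W, S)` be a Coxeter system in which every pair of distinct generators either
commutes (`m(s,t) = 2`) or satisfies no relation (`m(s,t) = ∞`, encoded as `0`).  A word
represents the identity of `W` if and only if it can be reduced to the empty word using
only deletions of factors `ss` and swaps of adjacent commuting generators. -/
theorem stmt_15 (B W : Type*) [Group W] (M : CoxeterMatrix B) (cs : CoxeterSystem M W)
    (hM : ∀ s t : B, s ≠ t → M s t = 2 ∨ M s t = 0) (ω : List B) :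
    cs.wordProd ω = 1 ↔ Relation.ReflTransGen (RAMove M) ω [] := by
  constructor
  · intro h1
    have hact := RAProof.act_word cs hM ω []
    rw [h1, map_one, Equiv.Perm.one_apply, List.append_nil] at hact
    have heqv : Relation.EqvGen (RAMove M) ω [] :=
      Relation.EqvGen.symm _ _ (Quot.eq.mp hact)
    exact (RAProof.rtg_of_eqvGen heqv).mp Relation.ReflTransGen.refl
  · intro h
    exact RAProof.wordProd_eq_one_of_rtg cs h
end

section
/- Let Delta be a simplicial complex, q a nonnegative integer, and sigma_0 a maximal simplex of dimension at least q. The relation of discrete q-homotopy on q-loops based at sigma_0 is an equivalence relation, and concatenation of q-loops induces a group structure on the set A_1^q(Delta, sigma_0) of equivalence classes, with identity the class of the constant loop and with the inverse of the class of (sigma_0, sigma_1, ..., sigma_k, sigma_0) being the class of the reversed loop (sigma_0, sigma_k, ..., sigma_1, sigma_0). -/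
/-- Two simplices are `q`-near if they share at least `q + 1` vertices. -/
def qNear {V : Type*} [DecidableEq V] (q : ℕ) (σ τ : Finset V) : Prop :=
  q + 1 ≤ (σ ∩ τ).card

/-- `σ` is a maximal simplex (facet) of the simplicial complex `Δ`. -/
def IsMaxSimp {V : Type*} (Δ : Set (Finset V)) (σ : Finset V) : Prop :=
  σ ∈ Δ ∧ ∀ τ ∈ Δ, σ ⊆ τ → τ = σ

/-- A `q`-loop based at `σ₀`: a nonempty sequence of maximal simplices starting and ending
at `σ₀` in which consecutive simplices are `q`-near. -/
def IsQLoop {V : Type*} [DecidableEq V] (Δ : Set (Finset V)) (q : ℕ) (σ₀ : Finset V)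
    (l : List (Finset V)) : Prop :=
  l.head? = some σ₀ ∧ l.getLast? = some σ₀ ∧ l.Chain' (qNear q) ∧ ∀ σ ∈ l, IsMaxSimp Δ σ

/-- A discrete homotopy grid between two `q`-loops of the same length: a rectangular grid
whose rows are `q`-loops based at `σ₀`, with first row `a`, last row `b`, and consecutive
rows entrywise `q`-near (so the columns are `q`-chains). -/
def GridStep {V : Type*} [DecidableEq V] (Δ : Set (Finset V)) (q : ℕ) (σ₀ : Finset V)
    (a b : List (Finset V)) : Prop :=
  ∃ rows : List (List (Finset V)), rows.head? = some a ∧ rows.getLast? = some b ∧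
    (∀ r ∈ rows, IsQLoop Δ q σ₀ r) ∧ rows.Chain' (List.Forall₂ (qNear q))

/-- Stretching: repetition of one entry of a `q`-loop. -/
def Stretch {V : Type*} (a b : List (Finset V)) : Prop :=
  ∃ (l₁ l₂ : List (Finset V)) (σ : Finset V),
    a = l₁ ++ [σ] ++ l₂ ∧ b = l₁ ++ [σ, σ] ++ l₂

/-- Discrete `q`-homotopy of `q`-loops: the equivalence relation generated by grid
equivalence together with stretching. -/
def QHomotopic {V : Type*} [DecidableEq V] (Δ : Set (Finset V)) (q : ℕ) (σ₀ : Finset V) :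
    List (Finset V) → List (Finset V) → Prop :=
  Relation.EqvGen (fun a b => GridStep Δ q σ₀ a b ∨ Stretch a b ∨ Stretch b a)

/-- The type of `q`-loops of `Δ` based at `σ₀`. -/
def QLoop {V : Type*} [DecidableEq V] (Δ : Set (Finset V)) (q : ℕ) (σ₀ : Finset V) :=
  { l : List (Finset V) // IsQLoop Δ q σ₀ l }

/-- Discrete `q`-homotopy, as a relation on based `q`-loops. -/
def loopRel {V : Type*} [DecidableEq V] (Δ : Set (Finset V)) (q : ℕ) (σ₀ : Finset V)
    (a b : QLoop Δ q σ₀) : Prop :=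
  QHomotopic Δ q σ₀ a.1 b.1

section Dev
variable {V : Type*} [DecidableEq V] {Δ : Set (Finset V)} {q : ℕ} {σ₀ : Finset V}

lemma qNear_symm {σ τ : Finset V} (h : qNear q σ τ) : qNear q τ σ := by
  unfold qNear at *; rwa [Finset.inter_comm]

lemma qNear_refl_of_card {σ : Finset V} (h : q + 1 ≤ σ.card) : qNear q σ σ := by
  simpa [qNear] using h

lemma qNear.card_left {σ τ : Finset V} (h : qNear q σ τ) : q + 1 ≤ σ.card :=
  h.trans (Finset.card_le_card Finset.inter_subset_left)

lemma qNear.card_right {σ τ : Finset V} (h : qNear q σ τ) : q + 1 ≤ τ.card :=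
  h.trans (Finset.card_le_card Finset.inter_subset_right)

lemma chain'_card : ∀ {l : List (Finset V)}, 2 ≤ l.length → l.Chain' (qNear q) →
    ∀ σ ∈ l, q + 1 ≤ σ.card
  | [], h, _, _, _ => by simp at h
  | [_], h, _, _, _ => by simp at h
  | x :: y :: r, _, hc, σ, hm => by
    rw [List.Chain', List.isChain_cons_cons] at hc
    rcases List.mem_cons.1 hm with rfl | hm
    · exact hc.1.card_left
    · rcases r with _ | ⟨z, r⟩
      · rw [List.mem_singleton] at hm; subst hm; exact hc.1.card_right
      · exact chain'_card (by simp) hc.2 σ hm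

lemma IsQLoop.ne_nil {l : List (Finset V)} (h : IsQLoop Δ q σ₀ l) : l ≠ [] := by
  intro e; subst e; simpa using h.1

lemma IsQLoop.card (hdim : q + 1 ≤ σ₀.card) {l : List (Finset V)} (h : IsQLoop Δ q σ₀ l) :
    ∀ σ ∈ l, q + 1 ≤ σ.card := by
  rcases l with _ | ⟨x, t⟩
  · exact absurd h.1 (by simp)
  rcases t with _ | ⟨y, t⟩
  · intro σ hm
    rw [List.mem_singleton] at hm; subst hm
    have hx : σ = σ₀ := by simpa using h.1
    exact hx ▸ hdim
  · exact chain'_card (by simp) h.2.2.1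

lemma IsQLoop.cons_tail {l : List (Finset V)} (h : IsQLoop Δ q σ₀ l) : l = σ₀ :: l.tail := by
  cases l with
  | nil => simpa using h.1
  | cons x t =>
    have hx : x = σ₀ := by simpa using h.1
    simp [hx]

lemma IsQLoop.dropLast_concat {l : List (Finset V)} (h : IsQLoop Δ q σ₀ l) :
    l = l.dropLast ++ [σ₀] := by
  have hne := h.ne_nil
  have h2 : l.getLast hne = σ₀ := by
    have := h.2.1
    rw [List.getLast?_eq_getLast hne] at this
    exact Option.some_injective _ this
  conv_lhs => rw [← List.dropLast_append_getLast hne]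
  rw [h2]

lemma IsQLoop.append {a b : List (Finset V)} (ha : IsQLoop Δ q σ₀ a) (hb : IsQLoop Δ q σ₀ b) :
    IsQLoop Δ q σ₀ (a ++ b.tail) := by
  obtain ⟨ha1, ha2, ha3, ha4⟩ := ha
  obtain ⟨hb1, hb2, hb3, hb4⟩ := hb
  refine ⟨?_, ?_, ?_, ?_⟩
  · rw [List.head?_append, ha1]; rfl
  · rw [List.getLast?_append]
    rcases b with _ | ⟨x, t⟩
    · simp at hb1
    · rcases t with _ | ⟨y, t⟩
      · simpa using ha2
      · have : (y :: t).getLast? = some σ₀ := by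
          rw [← List.getLast?_cons_cons (a := x)]; exact hb2
        simp [this]
  · rw [List.Chain', List.isChain_append]
    refine ⟨ha3, hb3.tail, ?_⟩
    intro x hx y hy
    have hx' : σ₀ = x := by rw [ha2] at hx; simpa using hx
    subst hx'
    rcases b with _ | ⟨z, t⟩
    · simp at hb1
    · have hz : z = σ₀ := by simpa using hb1
      subst hz
      rw [List.Chain', List.isChain_cons] at hb3
      exact hb3.1 y hy
  · intro σ hm
    rcases List.mem_append.1 hm with h | h
    · exact ha4 σ h
    · exact hb4 σ (List.mem_of_mem_tail h)

lemma IsQLoop.reverse {a : List (Finset V)} (ha : IsQLoop Δ q σ₀ a) :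
    IsQLoop Δ q σ₀ a.reverse := by
  obtain ⟨h1, h2, h3, h4⟩ := ha
  refine ⟨by simpa using h2, by simpa using h1, ?_, by simpa using h4⟩
  rw [List.Chain', List.isChain_reverse]
  exact h3.imp fun a b h => qNear_symm h

lemma IsQLoop.prepend {u r : List (Finset V)} (hu : IsQLoop Δ q σ₀ (u ++ [σ₀]))
    (hr : IsQLoop Δ q σ₀ r) : IsQLoop Δ q σ₀ (u ++ r) := by
  obtain ⟨hu1, hu2, hu3, hu4⟩ := hu
  obtain ⟨hr1, hr2, hr3, hr4⟩ := hr
  refine ⟨?_, ?_, ?_, ?_⟩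
  · rcases u with _ | ⟨x, t⟩
    · simpa using hr1
    · have hx : x = σ₀ := by simpa using hu1
      simp [hx]
  · rw [List.getLast?_append, hr2]; rfl
  · rw [List.Chain', List.isChain_append] at hu3 ⊢
    refine ⟨hu3.1, hr3, ?_⟩
    intro x hx y hy
    have hy' : σ₀ = y := by rw [hr1] at hy; simpa using hy
    subst hy'
    exact hu3.2.2 x hx σ₀ (by simp)
  · intro σ hm
    rcases List.mem_append.1 hm with h | h
    · exact hu4 σ (by simp [h])
    · exact hr4 σ h

lemma QHomotopic.append_right (hdim : q + 1 ≤ σ₀.card) {b : List (Finset V)}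
    (hb : IsQLoop Δ q σ₀ b) {x y : List (Finset V)} (h : QHomotopic Δ q σ₀ x y) :
    QHomotopic Δ q σ₀ (x ++ b.tail) (y ++ b.tail) := by
  induction h with
  | rel a c h =>
    refine Relation.EqvGen.rel _ _ ?_
    rcases h with hg | hs | hs
    · left
      obtain ⟨rows, hr1, hr2, hr3, hr4⟩ := hg
      refine ⟨rows.map (· ++ b.tail), ?_, ?_, ?_, ?_⟩
      · rw [List.head?_map, hr1]; rfl
      · rw [List.getLast?_map, hr2]; rfl
      · intro r hr
        obtain ⟨r', hr', rfl⟩ := List.mem_map.1 hr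
        exact (hr3 r' hr').append hb
      · rw [List.Chain', List.isChain_map]
        refine hr4.imp fun r s hrs => ?_
        exact List.rel_append hrs (List.forall₂_same.2 fun σ hσ =>
          qNear_refl_of_card (hb.card hdim σ (List.mem_of_mem_tail hσ)))
    · right; left
      obtain ⟨l₁, l₂, σ, rfl, rfl⟩ := hs
      exact ⟨l₁, l₂ ++ b.tail, σ, by simp, by simp⟩
    · right; right
      obtain ⟨l₁, l₂, σ, rfl, rfl⟩ := hs
      exact ⟨l₁, l₂ ++ b.tail, σ, by simp, by simp⟩
  | refl a => exact .refl _
  | symm a c _ ih => exact .symm _ _ ih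
  | trans a c d _ _ ih1 ih2 => exact .trans _ _ _ ih1 ih2

lemma QHomotopic.append_left (hdim : q + 1 ≤ σ₀.card) {u : List (Finset V)}
    (hu : IsQLoop Δ q σ₀ (u ++ [σ₀])) {x y : List (Finset V)} (h : QHomotopic Δ q σ₀ x y) :
    QHomotopic Δ q σ₀ (u ++ x) (u ++ y) := by
  induction h with
  | rel a c h =>
    refine Relation.EqvGen.rel _ _ ?_
    rcases h with hg | hs | hs
    · left
      obtain ⟨rows, hr1, hr2, hr3, hr4⟩ := hg
      refine ⟨rows.map (u ++ ·), ?_, ?_, ?_, ?_⟩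
      · rw [List.head?_map, hr1]; rfl
      · rw [List.getLast?_map, hr2]; rfl
      · intro r hr
        obtain ⟨r', hr', rfl⟩ := List.mem_map.1 hr
        exact hu.prepend (hr3 r' hr')
      · rw [List.Chain', List.isChain_map]
        refine hr4.imp fun r s hrs => ?_
        exact List.rel_append (List.forall₂_same.2 fun σ hσ =>
          qNear_refl_of_card (hu.card hdim σ (by simp [hσ]))) hrs
    · right; left
      obtain ⟨l₁, l₂, σ, rfl, rfl⟩ := hs
      exact ⟨u ++ l₁, l₂, σ, by simp, by simp⟩
    · right; right
      obtain ⟨l₁, l₂, σ, rfl, rfl⟩ := hs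
      exact ⟨u ++ l₁, l₂, σ, by simp, by simp⟩
  | refl a => exact .refl _
  | symm a c _ ih => exact .symm _ _ ih
  | trans a c d _ _ ih1 ih2 => exact .trans _ _ _ ih1 ih2

lemma QHomotopic.rev {x y : List (Finset V)} (h : QHomotopic Δ q σ₀ x y) :
    QHomotopic Δ q σ₀ x.reverse y.reverse := by
  induction h with
  | rel a c h =>
    refine Relation.EqvGen.rel _ _ ?_
    rcases h with hg | hs | hs
    · left
      obtain ⟨rows, hr1, hr2, hr3, hr4⟩ := hg
      refine ⟨rows.map List.reverse, ?_, ?_, ?_, ?_⟩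
      · rw [List.head?_map, hr1]; rfl
      · rw [List.getLast?_map, hr2]; rfl
      · intro r hr
        obtain ⟨r', hr', rfl⟩ := List.mem_map.1 hr
        exact (hr3 r' hr').reverse
      · rw [List.Chain', List.isChain_map]
        exact hr4.imp fun r s hrs => List.rel_reverse hrs
    · right; left
      obtain ⟨l₁, l₂, σ, rfl, rfl⟩ := hs
      exact ⟨l₂.reverse, l₁.reverse, σ, by simp, by simp⟩
    · right; right
      obtain ⟨l₁, l₂, σ, rfl, rfl⟩ := hs
      exact ⟨l₂.reverse, l₁.reverse, σ, by simp, by simp⟩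
  | refl a => exact .refl _
  | symm a c _ ih => exact .symm _ _ ih
  | trans a c d _ _ ih1 ih2 => exact .trans _ _ _ ih1 ih2

lemma claimA (hdim : q + 1 ≤ σ₀.card) {u v : List (Finset V)} {x y : Finset V}
    (hloop : IsQLoop Δ q σ₀ (u ++ [x, y, x] ++ v)) :
    QHomotopic Δ q σ₀ (u ++ [x, y, x] ++ v) (u ++ [x] ++ v) := by
  have hx : q + 1 ≤ x.card := hloop.card hdim x (by simp)
  have hxx : qNear q x x := qNear_refl_of_card hx
  -- extract nearness from the chain
  have hchain := hloop.2.2.1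
  rw [List.append_assoc, List.Chain', List.isChain_append] at hchain
  obtain ⟨hcu, hcm, hjun⟩ := hchain
  simp only [List.cons_append, List.nil_append, List.isChain_cons_cons] at hcm
  obtain ⟨hxy, hyx, hcv⟩ := hcm
  -- the middle loop
  have hloop2 : IsQLoop Δ q σ₀ (u ++ [x, x, x] ++ v) := by
    obtain ⟨h1, h2, h3, h4⟩ := hloop
    refine ⟨?_, ?_, ?_, ?_⟩
    · rwa [List.append_assoc, List.head?_append] at h1 ⊢
    · rw [List.getLast?_append] at h2 ⊢
      rcases v with _ | ⟨z, t⟩ <;> simpa using h2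
    · rw [List.append_assoc, List.Chain', List.isChain_append]
      refine ⟨hcu, ?_, ?_⟩
      · simp only [List.cons_append, List.nil_append, List.isChain_cons_cons]
        exact ⟨hxx, hxx, hcv⟩
      · intro a ha b hb
        refine hjun a ha b ?_
        simpa using hb
    · intro σ hm
      refine h4 σ ?_
      simp only [List.mem_append, List.mem_cons, List.mem_singleton] at hm ⊢
      tauto
  -- grid step from the first loop to the middle loop
  have hgrid : GridStep Δ q σ₀ (u ++ [x, y, x] ++ v) (u ++ [x, x, x] ++ v) := by
    refine ⟨[u ++ [x, y, x] ++ v, u ++ [x, x, x] ++ v], rfl, rfl, ?_, ?_⟩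
    · intro r hr
      rcases List.mem_cons.1 hr with rfl | hr
      · exact hloop
      · rw [List.mem_singleton] at hr; subst hr; exact hloop2
    · rw [List.Chain', List.isChain_pair]
      have hu' : List.Forall₂ (qNear q) u u :=
        List.forall₂_same.2 fun σ hσ => qNear_refl_of_card (hloop.card hdim σ (by simp [hσ]))
      have hv' : List.Forall₂ (qNear q) v v :=
        List.forall₂_same.2 fun σ hσ => qNear_refl_of_card (hloop.card hdim σ (by simp [hσ]))
      exact List.rel_append (List.rel_append hu'
        (List.Forall₂.cons hxx (List.Forall₂.cons hyx
          (List.Forall₂.cons hxx List.Forall₂.nil)))) hv'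
  -- stretches from u ++ [x] ++ v up to u ++ [x,x,x] ++ v
  have hs1 : Stretch (u ++ [x] ++ v) (u ++ [x, x] ++ v) := ⟨u, v, x, rfl, rfl⟩
  have hs2 : Stretch (u ++ [x, x] ++ v) (u ++ [x, x, x] ++ v) :=
    ⟨u, x :: v, x, by simp, by simp⟩
  refine Relation.EqvGen.trans _ _ _ (Relation.EqvGen.rel _ _ (Or.inl hgrid)) ?_
  refine Relation.EqvGen.symm _ _ ?_
  exact Relation.EqvGen.trans _ _ _ (Relation.EqvGen.rel _ _ (Or.inr (Or.inl hs1)))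
    (Relation.EqvGen.rel _ _ (Or.inr (Or.inl hs2)))

lemma lemB (hdim : q + 1 ≤ σ₀.card) :
    ∀ t : List (Finset V), t ≠ [] → t.Chain' (qNear q) → t.getLast? = some σ₀ →
      (∀ σ ∈ t, IsMaxSimp Δ σ) → QHomotopic Δ q σ₀ (t.reverse ++ t.tail) [σ₀] := by
  intro t
  induction t with
  | nil => intro h; exact absurd rfl h
  | cons x s ih =>
    intro _ hchain hlast hmem
    rcases s with _ | ⟨z, s'⟩
    · have hx : x = σ₀ := by simpa using hlast
      subst hx
      exact Relation.EqvGen.refl _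
    · -- t = x :: z :: s'
      have hlast' : (z :: s').getLast? = some σ₀ := by
        rw [← List.getLast?_cons_cons (a := x)]; exact hlast
      have hchain' : (z :: s').Chain' (qNear q) := (List.isChain_cons_cons.1 hchain).2
      have hxz : qNear q x z := (List.isChain_cons_cons.1 hchain).1
      -- the big loop
      have hbig : IsQLoop Δ q σ₀ ((x :: z :: s').reverse ++ (z :: s')) := by
        refine ⟨?_, ?_, ?_, ?_⟩
        · rw [List.head?_append, List.head?_reverse, hlast]; rfl
        · rw [List.getLast?_append, hlast']; rfl
        · rw [List.Chain', List.isChain_append]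
          refine ⟨?_, hchain', ?_⟩
          · rw [List.isChain_reverse]
            exact hchain.imp fun a b h => qNear_symm h
          · intro a ha b hb
            have ha' : x = a := by
              rw [List.getLast?_reverse] at ha; simpa using ha
            have hb' : z = b := by simpa using hb
            rw [← ha', ← hb']; exact hxz
        · intro σ hm
          rcases List.mem_append.1 hm with h | h
          · exact hmem σ (by simpa using List.mem_reverse.1 h)
          · exact hmem σ (by simp [h])
      have key : (x :: z :: s').reverse ++ (z :: s')
          = s'.reverse ++ [z, x, z] ++ s' := by simp
      have hA : QHomotopic Δ q σ₀ (s'.reverse ++ [z, x, z] ++ s')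
          (s'.reverse ++ [z] ++ s') := claimA hdim (key ▸ hbig)
      have e2 : s'.reverse ++ [z] ++ s' = (z :: s').reverse ++ (z :: s').tail := by simp
      have hIH := ih (by simp) hchain' hlast' (fun σ hσ => hmem σ (by simp [hσ]))
      rw [List.tail_cons, key]
      refine Relation.EqvGen.trans _ _ _ hA ?_
      rw [e2]
      exact hIH

end Dev

/-- For a simplicial complex `Δ` and a maximal simplex `σ₀` of dimension at least `q`,
discrete `q`-homotopy is an equivalence relation on `q`-loops based at `σ₀`, and
concatenation induces a group structure on the set `A₁^q(Δ, σ₀)` of equivalence classes,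
with identity the class of the constant loop and inverses given by reversal of loops. -/
theorem stmt_18 (V : Type*) [DecidableEq V] (Δ : Set (Finset V))
    (hΔ : ∀ σ ∈ Δ, ∀ τ : Finset V, τ ⊆ σ → τ ∈ Δ)
    (q : ℕ) (σ₀ : Finset V) (hmax : IsMaxSimp Δ σ₀) (hdim : q + 1 ≤ σ₀.card) :
    ∃ hEq : Equivalence (loopRel Δ q σ₀),
      ∃ _grp : Group (Quotient (Setoid.mk (loopRel Δ q σ₀) hEq)),
        (∀ a b c : QLoop Δ q σ₀, c.1 = a.1 ++ b.1.tail →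
          Quotient.mk (Setoid.mk (loopRel Δ q σ₀) hEq) c =
            Quotient.mk (Setoid.mk (loopRel Δ q σ₀) hEq) a *
              Quotient.mk (Setoid.mk (loopRel Δ q σ₀) hEq) b) ∧
        (∀ e : QLoop Δ q σ₀, e.1 = [σ₀] →
          (1 : Quotient (Setoid.mk (loopRel Δ q σ₀) hEq)) =
            Quotient.mk (Setoid.mk (loopRel Δ q σ₀) hEq) e) ∧
        (∀ a b : QLoop Δ q σ₀, b.1 = a.1.reverse →
          (Quotient.mk (Setoid.mk (loopRel Δ q σ₀) hEq) a)⁻¹ =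
            Quotient.mk (Setoid.mk (loopRel Δ q σ₀) hEq) b) := by
  have hEq : Equivalence (loopRel Δ q σ₀) := by
    constructor
    · intro a; exact Relation.EqvGen.refl _
    · intro a b h; exact Relation.EqvGen.symm _ _ h
    · intro a b c h1 h2; exact Relation.EqvGen.trans _ _ _ h1 h2
  refine ⟨hEq, ?_⟩
  have oneLoop : IsQLoop Δ q σ₀ [σ₀] := by
    refine ⟨rfl, rfl, List.isChain_singleton _, ?_⟩
    intro σ h; rw [List.mem_singleton] at h; subst h; exact hmax
  set emul : QLoop Δ q σ₀ → QLoop Δ q σ₀ → QLoop Δ q σ₀ :=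
    fun a b => ⟨a.1 ++ b.1.tail, a.2.append b.2⟩ with hemul
  have hmul : ∀ a₁ b₁ a₂ b₂ : QLoop Δ q σ₀, loopRel Δ q σ₀ a₁ a₂ → loopRel Δ q σ₀ b₁ b₂ →
      loopRel Δ q σ₀ (emul a₁ b₁) (emul a₂ b₂) := by
    intro a₁ b₁ a₂ b₂ ha hb
    have h1 : QHomotopic Δ q σ₀ (a₁.1 ++ b₁.1.tail) (a₂.1 ++ b₁.1.tail) :=
      QHomotopic.append_right hdim b₁.2 ha
    have hu : IsQLoop Δ q σ₀ (a₂.1.dropLast ++ [σ₀]) := by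
      rw [← a₂.2.dropLast_concat]; exact a₂.2
    have h2 : QHomotopic Δ q σ₀ (a₂.1.dropLast ++ b₁.1) (a₂.1.dropLast ++ b₂.1) :=
      QHomotopic.append_left hdim hu hb
    have ea : a₂.1 ++ b₁.1.tail = a₂.1.dropLast ++ b₁.1 := by
      conv_rhs => rw [b₁.2.cons_tail]
      conv_lhs => rw [a₂.2.dropLast_concat]
      simp
    have eb : a₂.1 ++ b₂.1.tail = a₂.1.dropLast ++ b₂.1 := by
      conv_rhs => rw [b₂.2.cons_tail]
      conv_lhs => rw [a₂.2.dropLast_concat]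
      simp
    show QHomotopic Δ q σ₀ (a₁.1 ++ b₁.1.tail) (a₂.1 ++ b₂.1.tail)
    refine Relation.EqvGen.trans _ _ _ h1 ?_
    rw [ea, eb]
    exact h2
  letI mulI : Mul (Quotient (Setoid.mk (loopRel Δ q σ₀) hEq)) :=
    ⟨Quotient.map₂ emul (fun a₁ a₂ ha b₁ b₂ hb => hmul a₁ b₁ a₂ b₂ ha hb)⟩
  letI oneI : One (Quotient (Setoid.mk (loopRel Δ q σ₀) hEq)) :=
    ⟨Quotient.mk (Setoid.mk (loopRel Δ q σ₀) hEq) ⟨[σ₀], oneLoop⟩⟩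
  letI invI : Inv (Quotient (Setoid.mk (loopRel Δ q σ₀) hEq)) :=
    ⟨Quotient.map (fun a => ⟨a.1.reverse, a.2.reverse⟩) (fun a b h => QHomotopic.rev h)⟩
  refine ⟨Group.ofLeftAxioms ?_ ?_ ?_, ?_, ?_, ?_⟩
  · -- associativity
    intro a b c
    refine Quotient.inductionOn₃ a b c fun a b c => ?_
    refine congrArg (Quotient.mk _) (Subtype.ext ?_)
    show (a.1 ++ b.1.tail) ++ c.1.tail = a.1 ++ (b.1 ++ c.1.tail).tail
    conv_rhs => rw [b.2.cons_tail]
    simp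
  · -- one_mul
    intro a
    refine Quotient.inductionOn a fun a => ?_
    refine congrArg (Quotient.mk _) (Subtype.ext ?_)
    show [σ₀] ++ a.1.tail = a.1
    exact (a.2.cons_tail).symm
  · -- inv_mul
    intro a
    refine Quotient.inductionOn a fun a => ?_
    refine Quotient.sound ?_
    show QHomotopic Δ q σ₀ (a.1.reverse ++ a.1.tail) [σ₀]
    exact lemB hdim a.1 a.2.ne_nil a.2.2.2.1 a.2.2.1 a.2.2.2.2
  · -- concatenation
    intro a b c h
    exact congrArg (Quotient.mk _) (Subtype.ext h)
  · -- identity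
    intro e he
    exact congrArg (Quotient.mk _) (Subtype.ext he.symm)
  · -- inverse
    intro a b h
    exact congrArg (Quotient.mk _) (Subtype.ext h.symm)
end
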